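/- arXiv:1110.6916 — 3 statements merged into one kernel-verified Lean document; each statement's English description precedes it below -/
import Mathlib

section
/- Let X, Y, A be finitely valued random variables with A - X - Y a Markov chain, and let A take values in {1,...,K}. For each j define Y_j = Y if A = j and Y_j = e (an erasure symbol not in the range of Y) otherwise. Then the sum over j of I(X; Y_j | A) equals I(X; Y | A), and hence is at most I(X;Y). -/
open Finset

section Defs

/-- Probability of the event `X = x` under the mass function `μ`. -/
noncomputable def pr {Ω : Type*} [Fintype Ω] (μ : Ω → ℝ) {α : Type*} [Fintype α]
    [DecidableEq α] (X : Ω → α) (x : α) : ℝ :=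
  ∑ ω, if X ω = x then μ ω else 0

/-- Shannon entropy (base 2) of a finitely valued random variable. -/
noncomputable def ent {Ω : Type*} [Fintype Ω] (μ : Ω → ℝ) {α : Type*} [Fintype α]
    [DecidableEq α] (X : Ω → α) : ℝ :=
  - ∑ x, pr μ X x * Real.logb 2 (pr μ X x)

/-- Conditional entropy `H(X|Y) = H(X,Y) - H(Y)`. -/
noncomputable def condEnt {Ω : Type*} [Fintype Ω] (μ : Ω → ℝ) {α β : Type*}
    [Fintype α] [DecidableEq α] [Fintype β] [DecidableEq β]
    (X : Ω → α) (Y : Ω → β) : ℝ :=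
  ent μ (fun ω => (X ω, Y ω)) - ent μ Y

/-- Mutual information `I(X;Y) = H(X) - H(X|Y)`. -/
noncomputable def mi {Ω : Type*} [Fintype Ω] (μ : Ω → ℝ) {α β : Type*}
    [Fintype α] [DecidableEq α] [Fintype β] [DecidableEq β]
    (X : Ω → α) (Y : Ω → β) : ℝ :=
  ent μ X - condEnt μ X Y

/-- Conditional mutual information `I(X;Y|Z) = H(X|Z) - H(X|Y,Z)`. -/
noncomputable def cmi {Ω : Type*} [Fintype Ω] (μ : Ω → ℝ) {α β γ : Type*}
    [Fintype α] [DecidableEq α] [Fintype β] [DecidableEq β] [Fintype γ] [DecidableEq γ]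
    (X : Ω → α) (Y : Ω → β) (Z : Ω → γ) : ℝ :=
  condEnt μ X Z - condEnt μ X (fun ω => (Y ω, Z ω))

/-- `μ` is a probability mass function on the finite sample space `Ω`. -/
def IsProb {Ω : Type*} [Fintype Ω] (μ : Ω → ℝ) : Prop :=
  (∀ ω, 0 ≤ μ ω) ∧ ∑ ω, μ ω = 1

/-- `A` and `Y` are conditionally independent given `X` (Markov chain `A - X - Y`). -/
def CondIndep {Ω : Type*} [Fintype Ω] (μ : Ω → ℝ) {α β γ : Type*}
    [Fintype α] [DecidableEq α] [Fintype β] [DecidableEq β] [Fintype γ] [DecidableEq γ]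
    (A : Ω → α) (Y : Ω → β) (X : Ω → γ) : Prop :=
  ∀ a y x, pr μ (fun ω => (A ω, Y ω, X ω)) (a, y, x) * pr μ X x =
    pr μ (fun ω => (A ω, X ω)) (a, x) * pr μ (fun ω => (Y ω, X ω)) (y, x)

/-- Binary entropy function (base 2). -/
noncomputable def H2 (p : ℝ) : ℝ :=
  -(p * Real.logb 2 p) - (1 - p) * Real.logb 2 (1 - p)

end Defs


section Helpers
variable {Ω : Type*} [Fintype Ω] {μ : Ω → ℝ}
variable {α β γ : Type*} [Fintype α] [DecidableEq α] [Fintype β] [DecidableEq β]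
  [Fintype γ] [DecidableEq γ]

/-- `p ↦ p log₂ p`. -/
noncomputable def ph (p : ℝ) : ℝ := p * Real.logb 2 p

@[simp] lemma ph_zero : ph 0 = 0 := by simp [ph]

lemma ent_eq (X : Ω → α) : ent μ X = -∑ x, ph (pr μ X x) := rfl

lemma pr_nonneg (hμ : ∀ ω, 0 ≤ μ ω) (X : Ω → α) (x : α) : 0 ≤ pr μ X x := by
  unfold pr
  apply Finset.sum_nonneg
  intro ω _
  split <;> simp [hμ ω]

lemma pr_eq_zero (X : Ω → α) {x : α} (h : ∀ ω, X ω ≠ x) : pr μ X x = 0 := by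
  unfold pr
  apply Finset.sum_eq_zero
  intro ω _
  simp [h ω]

lemma pr_congr (X : Ω → α) (Y : Ω → β) {x : α} {y : β}
    (h : ∀ ω, X ω = x ↔ Y ω = y) : pr μ X x = pr μ Y y := by
  unfold pr
  exact Finset.sum_congr rfl fun ω _ => by simp only [h ω]

lemma pr_fst (X : Ω → α) (A : Ω → γ) (x : α) :
    pr μ X x = ∑ a, pr μ (fun ω => (X ω, A ω)) (x, a) := by
  unfold pr
  rw [Finset.sum_comm]
  refine Finset.sum_congr rfl fun ω _ => ?_
  by_cases h : X ω = x <;>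
    simp [h, Prod.ext_iff, Finset.sum_ite_eq, Finset.sum_ite_eq']

lemma pr_snd (X : Ω → α) (A : Ω → γ) (a : γ) :
    pr μ A a = ∑ x, pr μ (fun ω => (X ω, A ω)) (x, a) := by
  unfold pr
  rw [Finset.sum_comm]
  refine Finset.sum_congr rfl fun ω _ => ?_
  by_cases h : A ω = a <;>
    simp [h, Prod.ext_iff, Finset.sum_ite_eq, Finset.sum_ite_eq']

lemma pr_mid (X : Ω → α) (Y : Ω → β) (A : Ω → γ) (x : α) (a : γ) :
    pr μ (fun ω => (X ω, A ω)) (x, a)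
      = ∑ y, pr μ (fun ω => (X ω, Y ω, A ω)) (x, y, a) := by
  unfold pr
  rw [Finset.sum_comm]
  refine Finset.sum_congr rfl fun ω _ => ?_
  by_cases h : X ω = x ∧ A ω = a
  · simp [h.1, h.2, Prod.ext_iff, Finset.sum_ite_eq, Finset.sum_ite_eq']
  · simp only [Prod.mk.injEq]
    rw [if_neg (by tauto)]
    refine (Finset.sum_eq_zero fun y _ => ?_).symm
    rw [if_neg (by tauto)]

lemma pr_total (X : Ω → α) : ∑ x, pr μ X x = ∑ ω, μ ω := by
  unfold pr
  rw [Finset.sum_comm]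
  refine Finset.sum_congr rfl fun ω _ => ?_
  simp only [Finset.sum_ite_eq, Finset.mem_univ, if_true]

lemma pr_pair_le_fst (hμ : ∀ ω, 0 ≤ μ ω) (X : Ω → α) (A : Ω → γ) (x : α) (a : γ) :
    pr μ (fun ω => (X ω, A ω)) (x, a) ≤ pr μ X x := by
  rw [pr_fst X A x]
  exact Finset.single_le_sum
    (fun b _ => pr_nonneg hμ (fun ω => (X ω, A ω)) (x, b)) (Finset.mem_univ a)

lemma pr_pair_le_snd (hμ : ∀ ω, 0 ≤ μ ω) (X : Ω → α) (A : Ω → γ) (x : α) (a : γ) :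
    pr μ (fun ω => (X ω, A ω)) (x, a) ≤ pr μ A a := by
  rw [pr_snd X A a]
  exact Finset.single_le_sum
    (fun b _ => pr_nonneg hμ (fun ω => (X ω, A ω)) (b, a)) (Finset.mem_univ x)

end Helpers

section Helpers2
variable {Ω : Type*} [Fintype Ω] {μ : Ω → ℝ}
variable {α β γ : Type*} [Fintype α] [DecidableEq α] [Fintype β] [DecidableEq β]
  [Fintype γ] [DecidableEq γ]

lemma sum_pair_fst (X : Ω → α) (A : Ω → γ) (g : α → ℝ) :
    ∑ v : α × γ, pr μ (fun ω => (X ω, A ω)) v * g v.1 = ∑ x, pr μ X x * g x := by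
  rw [Fintype.sum_prod_type]
  refine Finset.sum_congr rfl fun x _ => ?_
  show ∑ a, pr μ (fun ω => (X ω, A ω)) (x, a) * g x = _
  rw [← Finset.sum_mul, ← pr_fst]

lemma sum_pair_snd (X : Ω → α) (A : Ω → γ) (g : γ → ℝ) :
    ∑ v : α × γ, pr μ (fun ω => (X ω, A ω)) v * g v.2 = ∑ a, pr μ A a * g a := by
  rw [Fintype.sum_prod_type_right]
  refine Finset.sum_congr rfl fun a _ => ?_
  show ∑ x, pr μ (fun ω => (X ω, A ω)) (x, a) * g a = _
  rw [← Finset.sum_mul, ← pr_snd]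

lemma sum_triple_mid (X : Ω → α) (Y : Ω → β) (A : Ω → γ) (g : α × γ → ℝ) :
    ∑ v : α × β × γ, pr μ (fun ω => (X ω, Y ω, A ω)) v * g (v.1, v.2.2)
      = ∑ w : α × γ, pr μ (fun ω => (X ω, A ω)) w * g w := by
  rw [Fintype.sum_prod_type, Fintype.sum_prod_type]
  refine Finset.sum_congr rfl fun x _ => ?_
  rw [Fintype.sum_prod_type, Finset.sum_comm]
  refine Finset.sum_congr rfl fun a _ => ?_
  show ∑ y, pr μ (fun ω => (X ω, Y ω, A ω)) (x, y, a) * g (x, a) = _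
  rw [← Finset.sum_mul, ← pr_mid]

lemma pr_comp_equiv (e : α ≃ γ) (X : Ω → α) (x : α) :
    pr μ (fun ω => e (X ω)) (e x) = pr μ X x :=
  pr_congr _ _ fun ω => by simp

lemma ent_comp_equiv (e : α ≃ γ) (X : Ω → α) :
    ent μ (fun ω => e (X ω)) = ent μ X := by
  unfold ent
  congr 1
  refine (Fintype.sum_equiv e
    (fun x => pr μ X x * Real.logb 2 (pr μ X x)) _ fun x => ?_).symm
  rw [pr_comp_equiv]

/-- Gibbs' inequality. -/
lemma gibbs {ι : Type*} [Fintype ι] (p q : ι → ℝ) (hp : ∀ i, 0 ≤ p i)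
    (hq : ∀ i, 0 ≤ q i) (hpq : ∀ i, q i = 0 → p i = 0)
    (hsum : ∑ i, q i ≤ ∑ i, p i) :
    ∑ i, p i * Real.logb 2 (q i) ≤ ∑ i, p i * Real.logb 2 (p i) := by
  have h2 : (0:ℝ) < Real.log 2 := Real.log_pos (by norm_num)
  have key : ∀ i, p i * Real.log (q i) - p i * Real.log (p i) ≤ q i - p i := by
    intro i
    rcases eq_or_lt_of_le (hp i) with h0 | h0
    · rw [← h0]; simpa using hq i
    · have hq0 : 0 < q i := (hq i).lt_of_ne fun h => h0.ne' (hpq i h.symm)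
      have hlog : Real.log (q i) - Real.log (p i) ≤ q i / p i - 1 := by
        have := Real.log_le_sub_one_of_pos (show 0 < q i / p i by positivity)
        rwa [Real.log_div hq0.ne' h0.ne'] at this
      have hmul := mul_le_mul_of_nonneg_left hlog h0.le
      have hne : p i ≠ 0 := h0.ne'
      calc p i * Real.log (q i) - p i * Real.log (p i)
          = p i * (Real.log (q i) - Real.log (p i)) := by ring
        _ ≤ p i * (q i / p i - 1) := hmul
        _ = q i - p i := by field_simp
  have hsum2 : ∑ i, p i * Real.log (q i) ≤ ∑ i, p i * Real.log (p i) := by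
    have h := Finset.sum_le_sum fun i (_ : i ∈ Finset.univ) => key i
    rw [Finset.sum_sub_distrib, Finset.sum_sub_distrib] at h
    linarith
  simp only [Real.logb, ← mul_div_assoc]
  rw [← Finset.sum_div, ← Finset.sum_div]
  gcongr

end Helpers2

section Helpers3
variable {Ω : Type*} [Fintype Ω] {μ : Ω → ℝ}
variable {α β γ : Type*} [Fintype α] [DecidableEq α] [Fintype β] [DecidableEq β]
  [Fintype γ] [DecidableEq γ]

/-- Subadditivity of entropy. -/
lemma ent_pair_le (hμ : IsProb μ) (X : Ω → α) (A : Ω → γ) :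
    ent μ (fun ω => (X ω, A ω)) ≤ ent μ X + ent μ A := by
  unfold ent
  set P := pr μ (fun ω => (X ω, A ω)) with hP
  have hPnn : ∀ v, 0 ≤ P v := fun v => pr_nonneg hμ.1 _ v
  have hdom : ∀ v : α × γ, P v ≠ 0 → 0 < pr μ X v.1 ∧ 0 < pr μ A v.2 := by
    rintro ⟨x, a⟩ hv
    have h1 := pr_pair_le_fst hμ.1 X A x a
    have h2 := pr_pair_le_snd hμ.1 X A x a
    have h0 : (0:ℝ) < P (x, a) := (hPnn (x, a)).lt_of_ne (Ne.symm hv)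
    exact ⟨lt_of_lt_of_le h0 h1, lt_of_lt_of_le h0 h2⟩
  have key : ∑ v : α × γ, P v * Real.logb 2 (pr μ X v.1 * pr μ A v.2)
      ≤ ∑ v, P v * Real.logb 2 (P v) := by
    apply gibbs
    · exact hPnn
    · exact fun v => mul_nonneg (pr_nonneg hμ.1 _ _) (pr_nonneg hμ.1 _ _)
    · intro v h
      rcases eq_or_ne (P v) 0 with h0 | h0
      · exact h0
      · rcases mul_eq_zero.1 h with h' | h'
        · exact absurd h' (hdom v h0).1.ne'
        · exact absurd h' (hdom v h0).2.ne' 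
    · have hqsum : ∑ v : α × γ, pr μ X v.1 * pr μ A v.2 = 1 := by
        rw [Fintype.sum_prod_type, ← Finset.sum_mul_sum, pr_total, pr_total, hμ.2, mul_one]
      have hPsum : ∑ v, P v = 1 := by rw [hP, pr_total, hμ.2]
      rw [hqsum, hPsum]
  have hid : ∑ v : α × γ, P v * Real.logb 2 (pr μ X v.1 * pr μ A v.2)
      = ∑ v : α × γ, P v * Real.logb 2 (pr μ X v.1)
        + ∑ v : α × γ, P v * Real.logb 2 (pr μ A v.2) := by
    rw [← Finset.sum_add_distrib]
    refine Finset.sum_congr rfl fun v _ => ?_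
    rcases eq_or_ne (P v) 0 with h | h
    · simp [h]
    · rw [Real.logb_mul (hdom v h).1.ne' (hdom v h).2.ne', mul_add]
  have e1 : ∑ v : α × γ, P v * Real.logb 2 (pr μ X v.1)
      = ∑ x, pr μ X x * Real.logb 2 (pr μ X x) :=
    sum_pair_fst X A fun x => Real.logb 2 (pr μ X x)
  have e2 : ∑ v : α × γ, P v * Real.logb 2 (pr μ A v.2)
      = ∑ a, pr μ A a * Real.logb 2 (pr μ A a) :=
    sum_pair_snd X A fun a => Real.logb 2 (pr μ A a)
  linarith

lemma sum_triple_yz (A : Ω → γ) (Y : Ω → β) (X : Ω → α) (g : β × α → ℝ) :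
    ∑ v : γ × β × α, pr μ (fun ω => (A ω, Y ω, X ω)) v * g v.2
      = ∑ w : β × α, pr μ (fun ω => (Y ω, X ω)) w * g w := by
  rw [Fintype.sum_prod_type, Finset.sum_comm]
  refine Finset.sum_congr rfl fun p _ => ?_
  show ∑ a, pr μ (fun ω => (A ω, Y ω, X ω)) (a, p) * g p = _
  rw [← Finset.sum_mul, ← pr_snd A (fun ω => (Y ω, X ω)) p]

lemma sum_triple_last (A : Ω → γ) (Y : Ω → β) (X : Ω → α) (g : α → ℝ) :
    ∑ v : γ × β × α, pr μ (fun ω => (A ω, Y ω, X ω)) v * g v.2.2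
      = ∑ x, pr μ X x * g x :=
  (sum_triple_yz A Y X fun p => g p.2).trans (sum_pair_snd Y X g)

/-- Under the Markov chain `A - X - Y`, `H(A,Y,X) + H(X) = H(A,X) + H(Y,X)`. -/
lemma ent_markov (hμ : IsProb μ) (A : Ω → γ) (Y : Ω → β) (X : Ω → α)
    (hM : CondIndep μ A Y X) :
    ent μ (fun ω => (A ω, Y ω, X ω)) + ent μ X
      = ent μ (fun ω => (A ω, X ω)) + ent μ (fun ω => (Y ω, X ω)) := by
  unfold ent
  set P := pr μ (fun ω => (A ω, Y ω, X ω)) with hP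
  have T1 : ∑ v : γ × β × α, P v * Real.logb 2 (pr μ X v.2.2)
      = ∑ x, pr μ X x * Real.logb 2 (pr μ X x) :=
    sum_triple_last A Y X fun x => Real.logb 2 (pr μ X x)
  have T2 : ∑ v : γ × β × α, P v * Real.logb 2 (pr μ (fun ω => (A ω, X ω)) (v.1, v.2.2))
      = ∑ w : γ × α, pr μ (fun ω => (A ω, X ω)) w
          * Real.logb 2 (pr μ (fun ω => (A ω, X ω)) w) :=
    sum_triple_mid A Y X fun w => Real.logb 2 (pr μ (fun ω => (A ω, X ω)) w)
  have T3 : ∑ v : γ × β × α, P v * Real.logb 2 (pr μ (fun ω => (Y ω, X ω)) v.2)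
      = ∑ w : β × α, pr μ (fun ω => (Y ω, X ω)) w
          * Real.logb 2 (pr μ (fun ω => (Y ω, X ω)) w) :=
    sum_triple_yz A Y X fun w => Real.logb 2 (pr μ (fun ω => (Y ω, X ω)) w)
  have T0 : ∑ v : γ × β × α, P v * Real.logb 2 (P v)
        + ∑ v : γ × β × α, P v * Real.logb 2 (pr μ X v.2.2)
      = ∑ v : γ × β × α, P v * Real.logb 2 (pr μ (fun ω => (A ω, X ω)) (v.1, v.2.2))
        + ∑ v : γ × β × α, P v * Real.logb 2 (pr μ (fun ω => (Y ω, X ω)) v.2) := by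
    rw [← Finset.sum_add_distrib, ← Finset.sum_add_distrib]
    refine Finset.sum_congr rfl fun v _ => ?_
    obtain ⟨a, y, x⟩ := v
    rcases eq_or_ne (P (a, y, x)) 0 with h | h
    · simp [h]
    · have h0 : (0:ℝ) < P (a, y, x) := (pr_nonneg hμ.1 _ _).lt_of_ne (Ne.symm h)
      have hYX : P (a, y, x) ≤ pr μ (fun ω => (Y ω, X ω)) (y, x) :=
        pr_pair_le_snd hμ.1 A (fun ω => (Y ω, X ω)) a (y, x)
      have hXx : pr μ (fun ω => (Y ω, X ω)) (y, x) ≤ pr μ X x :=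
        pr_pair_le_snd hμ.1 Y X y x
      have hX0 : (0:ℝ) < pr μ X x := lt_of_lt_of_le h0 (hYX.trans hXx)
      have hMeq := hM a y x
      have hprod : (0:ℝ) < pr μ (fun ω => (A ω, X ω)) (a, x)
          * pr μ (fun ω => (Y ω, X ω)) (y, x) := by
        rw [← hMeq]; positivity
      have hAX0 : (0:ℝ) < pr μ (fun ω => (A ω, X ω)) (a, x) :=
        (pr_nonneg hμ.1 _ _).lt_of_ne fun hc => by
          rw [← hc] at hprod; simp at hprod
      have hYX0 : (0:ℝ) < pr μ (fun ω => (Y ω, X ω)) (y, x) := lt_of_lt_of_le h0 hYX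
      have := congrArg (Real.logb 2) hMeq
      rw [Real.logb_mul h0.ne' hX0.ne', Real.logb_mul hAX0.ne' hYX0.ne'] at this
      simp only [mul_comm, mul_add, ← mul_assoc]
      nlinarith [this]
  linarith

end Helpers3

section Helpers4
variable {Ω : Type*} [Fintype Ω] {μ : Ω → ℝ}
variable {α β γ : Type*} [Fintype α] [DecidableEq α] [Fintype β] [DecidableEq β]
  [Fintype γ] [DecidableEq γ]

lemma ent_erase_pair (X : Ω → α) (Y : Ω → β) (A : Ω → γ) (j : γ) :
    ent μ (fun ω => (X ω, (if A ω = j then some (Y ω) else (none : Option β), A ω)))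
      = ent μ (fun ω => (X ω, A ω))
        + ∑ x, ph (pr μ (fun ω => (X ω, A ω)) (x, j))
        - ∑ x, ∑ y, ph (pr μ (fun ω => (X ω, (Y ω, A ω))) (x, (y, j))) := by
  set W := fun ω => (X ω, (if A ω = j then some (Y ω) else (none : Option β), A ω)) with hW
  have PrA : ∀ (x : α) (a : γ), a ≠ j →
      pr μ W (x, none, a) = pr μ (fun ω => (X ω, A ω)) (x, a) := by
    intro x a ha
    refine pr_congr _ _ fun ω => ?_
    simp only [hW, Prod.mk.injEq]
    constructor
    · rintro ⟨hx, _, hA⟩; exact ⟨hx, hA⟩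
    · rintro ⟨hx, hA⟩
      exact ⟨hx, if_neg (by rw [hA]; exact ha), hA⟩
  have PrB : ∀ x : α, pr μ W (x, none, j) = 0 := by
    intro x
    apply pr_eq_zero
    intro ω h
    simp only [hW, Prod.mk.injEq] at h
    obtain ⟨-, h2, h3⟩ := h
    rw [if_pos h3] at h2
    exact Option.some_ne_none _ h2
  have PrC : ∀ (x : α) (y : β) (a : γ), pr μ W (x, some y, a)
      = if a = j then pr μ (fun ω => (X ω, (Y ω, A ω))) (x, (y, j)) else 0 := by
    intro x y a
    split_ifs with h
    · subst h
      refine pr_congr _ _ fun ω => ?_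
      simp only [hW, Prod.mk.injEq]
      constructor
      · rintro ⟨hx, hy, hA⟩
        rw [if_pos hA] at hy
        exact ⟨hx, Option.some.inj hy, hA⟩
      · rintro ⟨hx, hy, hA⟩
        exact ⟨hx, by rw [if_pos hA, hy], hA⟩
    · apply pr_eq_zero
      intro ω hEq
      simp only [hW, Prod.mk.injEq] at hEq
      obtain ⟨-, h2, h3⟩ := hEq
      by_cases hA : A ω = j
      · exact h (h3 ▸ hA)
      · rw [if_neg hA] at h2; exact Option.some_ne_none _ h2.symm
  have inner : ∀ x : α, ∑ s : Option β × γ, ph (pr μ W (x, s))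
      = ((∑ a, ph (pr μ (fun ω => (X ω, A ω)) (x, a)))
          - ph (pr μ (fun ω => (X ω, A ω)) (x, j)))
        + ∑ y, ph (pr μ (fun ω => (X ω, (Y ω, A ω))) (x, (y, j))) := by
    intro x
    rw [Fintype.sum_prod_type, Fintype.sum_option]
    have c1 : ∀ a : γ, ph (pr μ W (x, none, a))
        = ph (pr μ (fun ω => (X ω, A ω)) (x, a))
          - (if a = j then ph (pr μ (fun ω => (X ω, A ω)) (x, a)) else 0) := by
      intro a
      by_cases h : a = j
      · subst h; rw [PrB x]; simp
      · rw [PrA x a h]; simp [h]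
    have c2 : ∀ (y : β) (a : γ), ph (pr μ W (x, some y, a))
        = if a = j then ph (pr μ (fun ω => (X ω, (Y ω, A ω))) (x, (y, j))) else 0 := by
      intro y a
      rw [PrC]
      split <;> simp
    rw [Finset.sum_congr rfl fun a _ => c1 a, Finset.sum_sub_distrib,
      Finset.sum_ite_eq' Finset.univ j
        (fun a => ph (pr μ (fun ω => (X ω, A ω)) (x, a)))]
    simp only [Finset.mem_univ, if_true]
    congr 1
    refine Finset.sum_congr rfl fun y _ => ?_
    rw [Finset.sum_congr rfl fun a _ => c2 y a,
      Finset.sum_ite_eq' Finset.univ j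
        (fun _ => ph (pr μ (fun ω => (X ω, (Y ω, A ω))) (x, (y, j))))]
    simp
  rw [ent_eq, ent_eq, Fintype.sum_prod_type,
    Finset.sum_congr rfl fun x (_ : x ∈ Finset.univ) => inner x,
    Fintype.sum_prod_type]
  rw [Finset.sum_add_distrib, Finset.sum_sub_distrib]
  ring

lemma ent_erase_single (Y : Ω → β) (A : Ω → γ) (j : γ) :
    ent μ (fun ω => (if A ω = j then some (Y ω) else (none : Option β), A ω))
      = ent μ A + ph (pr μ A j)
        - ∑ y, ph (pr μ (fun ω => (Y ω, A ω)) (y, j)) := by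
  set W := fun ω => (if A ω = j then some (Y ω) else (none : Option β), A ω) with hW
  have PrA : ∀ (a : γ), a ≠ j → pr μ W (none, a) = pr μ A a := by
    intro a ha
    refine pr_congr _ _ fun ω => ?_
    simp only [hW, Prod.mk.injEq]
    constructor
    · rintro ⟨_, hA⟩; exact hA
    · intro hA
      exact ⟨if_neg (by rw [hA]; exact ha), hA⟩
  have PrB : pr μ W (none, j) = 0 := by
    apply pr_eq_zero
    intro ω h
    simp only [hW, Prod.mk.injEq] at h
    obtain ⟨h2, h3⟩ := h
    rw [if_pos h3] at h2
    exact Option.some_ne_none _ h2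
  have PrC : ∀ (y : β) (a : γ), pr μ W (some y, a)
      = if a = j then pr μ (fun ω => (Y ω, A ω)) (y, j) else 0 := by
    intro y a
    split_ifs with h
    · subst h
      refine pr_congr _ _ fun ω => ?_
      simp only [hW, Prod.mk.injEq]
      constructor
      · rintro ⟨hy, hA⟩
        rw [if_pos hA] at hy
        exact ⟨Option.some.inj hy, hA⟩
      · rintro ⟨hy, hA⟩
        exact ⟨by rw [if_pos hA, hy], hA⟩
    · apply pr_eq_zero
      intro ω hEq
      simp only [hW, Prod.mk.injEq] at hEq
      obtain ⟨h2, h3⟩ := hEq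
      by_cases hA : A ω = j
      · exact h (h3 ▸ hA)
      · rw [if_neg hA] at h2; exact Option.some_ne_none _ h2.symm
  have c1 : ∀ a : γ, ph (pr μ W (none, a))
      = ph (pr μ A a) - (if a = j then ph (pr μ A a) else 0) := by
    intro a
    by_cases h : a = j
    · subst h; rw [PrB]; simp
    · rw [PrA a h]; simp [h]
  have c2 : ∀ (y : β) (a : γ), ph (pr μ W (some y, a))
      = if a = j then ph (pr μ (fun ω => (Y ω, A ω)) (y, j)) else 0 := by
    intro y a
    rw [PrC]
    split <;> simp
  rw [ent_eq, ent_eq, Fintype.sum_prod_type, Fintype.sum_option]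
  rw [Finset.sum_congr rfl fun a (_ : a ∈ Finset.univ) => c1 a, Finset.sum_sub_distrib,
    Finset.sum_ite_eq' Finset.univ j (fun a => ph (pr μ A a))]
  have : ∀ y : β, ∑ a, ph (pr μ W (some y, a))
      = ph (pr μ (fun ω => (Y ω, A ω)) (y, j)) := by
    intro y
    rw [Finset.sum_congr rfl fun a _ => c2 y a,
      Finset.sum_ite_eq' Finset.univ j
        (fun _ => ph (pr μ (fun ω => (Y ω, A ω)) (y, j)))]
    simp
  rw [Finset.sum_congr rfl fun y (_ : y ∈ Finset.univ) => this y]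
  simp only [Finset.mem_univ, if_true]
  ring

end Helpers4


/-- With `A - X - Y` Markov and erasure side informations
`Y_j = Y` if `A = j`, `= e` (i.e. `none`) otherwise, the sum over `j` of
`I(X;Y_j|A)` equals `I(X;Y|A)`, which is at most `I(X;Y)`. -/
theorem stmt1 {Ω α β : Type*} [Fintype Ω] [Fintype α] [DecidableEq α]
    [Fintype β] [DecidableEq β] {K : ℕ} (hK : 1 ≤ K)
    (μ : Ω → ℝ) (hμ : IsProb μ) (X : Ω → α) (Y : Ω → β) (A : Ω → Fin K)
    (hMarkov : CondIndep μ A Y X) :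
    (∑ j : Fin K,
        cmi μ X (fun ω => if A ω = j then some (Y ω) else (none : Option β)) A)
      = cmi μ X Y A ∧ cmi μ X Y A ≤ mi μ X Y := by
  constructor
  · -- equality part
    have hsummand : ∀ j : Fin K,
        cmi μ X (fun ω => if A ω = j then some (Y ω) else (none : Option β)) A
          = ph (pr μ A j) - (∑ x, ph (pr μ (fun ω => (X ω, A ω)) (x, j)))
            + ((∑ x, ∑ y, ph (pr μ (fun ω => (X ω, (Y ω, A ω))) (x, (y, j))))
              - ∑ y, ph (pr μ (fun ω => (Y ω, A ω)) (y, j))) := by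
      intro j
      simp only [cmi, condEnt]
      rw [ent_erase_pair X Y A j, ent_erase_single Y A j]
      ring
    rw [Finset.sum_congr rfl fun j (_ : j ∈ Finset.univ) => hsummand j]
    have SXA : ∑ j : Fin K, ∑ x, ph (pr μ (fun ω => (X ω, A ω)) (x, j))
        = ∑ w : α × Fin K, ph (pr μ (fun ω => (X ω, A ω)) w) :=
      (Fintype.sum_prod_type_right
        (fun w : α × Fin K => ph (pr μ (fun ω => (X ω, A ω)) w))).symm
    have SYA : ∑ j : Fin K, ∑ y, ph (pr μ (fun ω => (Y ω, A ω)) (y, j))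
        = ∑ w : β × Fin K, ph (pr μ (fun ω => (Y ω, A ω)) w) :=
      (Fintype.sum_prod_type_right
        (fun w : β × Fin K => ph (pr μ (fun ω => (Y ω, A ω)) w))).symm
    have SXYA : ∑ j : Fin K, ∑ x, ∑ y, ph (pr μ (fun ω => (X ω, (Y ω, A ω))) (x, (y, j)))
        = ∑ v : α × β × Fin K, ph (pr μ (fun ω => (X ω, (Y ω, A ω))) v) := by
      symm
      calc ∑ v : α × β × Fin K, ph (pr μ (fun ω => (X ω, (Y ω, A ω))) v)
          = ∑ x, ∑ q : β × Fin K, ph (pr μ (fun ω => (X ω, (Y ω, A ω))) (x, q)) :=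
            Fintype.sum_prod_type
              (fun v : α × β × Fin K => ph (pr μ (fun ω => (X ω, (Y ω, A ω))) v))
        _ = ∑ x, ∑ j, ∑ y, ph (pr μ (fun ω => (X ω, (Y ω, A ω))) (x, (y, j))) :=
            Finset.sum_congr rfl fun x _ => Fintype.sum_prod_type_right
              (fun q : β × Fin K => ph (pr μ (fun ω => (X ω, (Y ω, A ω))) (x, q)))
        _ = ∑ j, ∑ x, ∑ y, ph (pr μ (fun ω => (X ω, (Y ω, A ω))) (x, (y, j))) :=
            Finset.sum_comm
    rw [Finset.sum_add_distrib, Finset.sum_sub_distrib, Finset.sum_sub_distrib,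
      SXA, SYA, SXYA]
    simp only [cmi, condEnt, ent_eq, Fintype.sum_prod_type]
    ring
  · -- inequality part
    have M := ent_markov hμ A Y X hMarkov
    have e1 : ent μ (fun ω => (X ω, (Y ω, A ω))) = ent μ (fun ω => (A ω, Y ω, X ω)) :=
      (ent_comp_equiv
        (⟨fun p => (p.2.2, p.2.1, p.1), fun p => (p.2.2, p.2.1, p.1),
          fun p => rfl, fun p => rfl⟩ : α × β × Fin K ≃ Fin K × β × α)
        (fun ω => (X ω, (Y ω, A ω)))).symm
    have e2 : ent μ (fun ω => (X ω, A ω)) = ent μ (fun ω => (A ω, X ω)) :=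
      (ent_comp_equiv
        (⟨fun p => (p.2, p.1), fun p => (p.2, p.1), fun p => rfl, fun p => rfl⟩ :
          α × Fin K ≃ Fin K × α)
        (fun ω => (X ω, A ω))).symm
    have e4 : ent μ (fun ω => (X ω, Y ω)) = ent μ (fun ω => (Y ω, X ω)) :=
      (ent_comp_equiv
        (⟨fun p => (p.2, p.1), fun p => (p.2, p.1), fun p => rfl, fun p => rfl⟩ :
          α × β ≃ β × α)
        (fun ω => (X ω, Y ω))).symm
    have sub := ent_pair_le hμ Y A
    simp only [cmi, condEnt, mi]
    linarith
end

section
/- Let X, Y be finitely valued random variables and K ≥ 1. For any finitely valued A with values in {1,...,K} such that A - X - Y is a Markov chain, defining Y_j = Y if A=j and Y_j = e otherwise, the quantity max over j in {1,...,K} of [H(X|Y_j, A) + I(X;A)] is at least H(X|Y) + ((K-1)/K) I(X;Y). -/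
open Finset

section Aux

noncomputable def g2 (t : ℝ) : ℝ := -(t * Real.logb 2 t)

lemma g2_zero : g2 0 = 0 := by simp [g2]

lemma log2pos : (0:ℝ) < Real.log 2 := Real.log_pos (by norm_num)

lemma sum_g2_row {γ : Type*} [Fintype γ] (f : γ → ℝ) (c : ℝ) :
    -((∑ a, f a) * c) = ∑ a, -(f a * c) := by
  rw [Finset.sum_mul]
  exact (Finset.sum_neg_distrib _).symm

lemma subadd {β γ : Type*} [Fintype β] [Fintype γ]
    (q : β → γ → ℝ) (h0 : ∀ y a, 0 ≤ q y a) (h1 : (∑ y, ∑ a, q y a) = 1) :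
    ∑ y, ∑ a, g2 (q y a) ≤ (∑ y, g2 (∑ a, q y a)) + (∑ a, g2 (∑ y, q y a)) := by
  set qY : β → ℝ := fun y => ∑ a, q y a with hqY
  set qA : γ → ℝ := fun a => ∑ y, q y a with hqA
  have hqY0 : ∀ y, 0 ≤ qY y := fun y => Finset.sum_nonneg fun a _ => h0 y a
  have hqA0 : ∀ a, 0 ≤ qA a := fun a => Finset.sum_nonneg fun y _ => h0 y a
  have hsY : ∑ y, qY y = 1 := h1
  have hsA : ∑ a, qA a = 1 := by rw [hqA]; rw [Finset.sum_comm]; exact h1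
  have key : ∀ y a, g2 (q y a) ≤
      (-(q y a * Real.logb 2 (qY y)) + -(q y a * Real.logb 2 (qA a)))
        + (qY y * qA a - q y a) / Real.log 2 := by
    intro y a
    rcases eq_or_lt_of_le (h0 y a) with h | h
    · rw [g2, ← h]
      simp only [neg_zero, zero_mul, sub_zero, neg_neg, add_zero, zero_add, neg_zero]
      exact div_nonneg (mul_nonneg (hqY0 y) (hqA0 a)) log2pos.le
    · have hY : 0 < qY y := lt_of_lt_of_le h (Finset.single_le_sum (fun a _ => h0 y a) (mem_univ a))
      have hA : 0 < qA a := lt_of_lt_of_le h (Finset.single_le_sum (fun y _ => h0 y a) (mem_univ y))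
      have hx : 0 < qY y * qA a / q y a := by positivity
      have hlog : Real.logb 2 (qY y * qA a / q y a) ≤ (qY y * qA a / q y a - 1) / Real.log 2 := by
        rw [Real.logb]
        exact div_le_div_of_nonneg_right (Real.log_le_sub_one_of_pos hx) log2pos.le
      have e : Real.logb 2 (qY y * qA a / q y a)
          = Real.logb 2 (qY y) + Real.logb 2 (qA a) - Real.logb 2 (q y a) := by
        rw [Real.logb_div (by positivity) (ne_of_gt h),
          Real.logb_mul (ne_of_gt hY) (ne_of_gt hA)]
      have hmul := mul_le_mul_of_nonneg_left hlog (le_of_lt h)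
      rw [e] at hmul
      have e2 : q y a * ((qY y * qA a / q y a - 1) / Real.log 2)
          = (qY y * qA a - q y a) / Real.log 2 := by
        field_simp
      rw [e2] at hmul
      rw [g2]
      nlinarith [hmul]
  calc ∑ y, ∑ a, g2 (q y a)
      ≤ ∑ y, ∑ a, ((-(q y a * Real.logb 2 (qY y)) + -(q y a * Real.logb 2 (qA a)))
        + (qY y * qA a - q y a) / Real.log 2) := by
        refine Finset.sum_le_sum fun y _ => Finset.sum_le_sum fun a _ => key y a
    _ = (∑ y, ∑ a, -(q y a * Real.logb 2 (qY y)))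
        + (∑ y, ∑ a, -(q y a * Real.logb 2 (qA a)))
        + ((∑ y, ∑ a, qY y * qA a) - (∑ y, ∑ a, q y a)) / Real.log 2 := by
        simp only [Finset.sum_add_distrib, sub_div, Finset.sum_sub_distrib,
          div_eq_mul_inv, ← Finset.sum_mul]
    _ = (∑ y, g2 (qY y)) + (∑ a, g2 (qA a)) := by
        have c1 : (∑ y, ∑ a, qY y * qA a) = 1 := by
          simp only [← Finset.mul_sum, hsA, mul_one, hsY]
        rw [c1, h1, sub_self, zero_div, add_zero]
        congr 1
        · exact (Finset.sum_congr rfl fun y _ => (sum_g2_row (fun a => q y a) _)).symm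
        · rw [Finset.sum_comm]
          exact (Finset.sum_congr rfl fun a _ => (sum_g2_row (fun y => q y a) _)).symm

lemma markov_ent {α β γ : Type*} [Fintype α] [Fintype β] [Fintype γ]
    (q : α → β → γ → ℝ) (h0 : ∀ x y a, 0 ≤ q x y a)
    (hM : ∀ x y a, q x y a * (∑ y', ∑ a', q x y' a')
        = (∑ y', q x y' a) * (∑ a', q x y a')) :
    (∑ x, ∑ y, ∑ a, g2 (q x y a)) - (∑ x, ∑ a, g2 (∑ y, q x y a))
      = (∑ x, ∑ y, g2 (∑ a, q x y a)) - (∑ x, g2 (∑ y, ∑ a, q x y a)) := by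
  have key : ∀ x y a, q x y a * Real.logb 2 (q x y a)
      = q x y a * Real.logb 2 (∑ y', q x y' a)
        + q x y a * Real.logb 2 (∑ a', q x y a')
        - q x y a * Real.logb 2 (∑ y', ∑ a', q x y' a') := by
    intro x y a
    rcases eq_or_lt_of_le (h0 x y a) with h | h
    · rw [← h]; ring
    · have hXA : 0 < ∑ y', q x y' a :=
        lt_of_lt_of_le h (Finset.single_le_sum (fun y' _ => h0 x y' a) (mem_univ y))
      have hXY : 0 < ∑ a', q x y a' :=
        lt_of_lt_of_le h (Finset.single_le_sum (fun a' _ => h0 x y a') (mem_univ a))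
      have hX : 0 < ∑ y', ∑ a', q x y' a' := by
        refine lt_of_lt_of_le hXY (Finset.single_le_sum (f := fun y' => ∑ a', q x y' a')
          (fun y' _ => Finset.sum_nonneg fun a' _ => h0 x y' a') (mem_univ y))
      have hq : q x y a = (∑ y', q x y' a) * (∑ a', q x y a') / (∑ y', ∑ a', q x y' a') := by
        field_simp
        exact hM x y a
      have : Real.logb 2 (q x y a)
          = Real.logb 2 (∑ y', q x y' a) + Real.logb 2 (∑ a', q x y a')
            - Real.logb 2 (∑ y', ∑ a', q x y' a') := by
        rw [hq, Real.logb_div (by positivity) (ne_of_gt hX),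
          Real.logb_mul (ne_of_gt hXA) (ne_of_gt hXY)]
      rw [this]; ring
  have lhs1 : (∑ x, ∑ y, ∑ a, g2 (q x y a))
      = -(∑ x, ∑ y, ∑ a, q x y a * Real.logb 2 (∑ y', q x y' a))
        - (∑ x, ∑ y, ∑ a, q x y a * Real.logb 2 (∑ a', q x y a'))
        + (∑ x, ∑ y, ∑ a, q x y a * Real.logb 2 (∑ y', ∑ a', q x y' a')) := by
    simp only [g2]
    simp only [Finset.sum_congr rfl fun x _ => Finset.sum_congr rfl fun y _ =>
      Finset.sum_congr rfl fun a _ => congrArg Neg.neg (key x y a)]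
    simp only [neg_sub, neg_add, Finset.sum_add_distrib, Finset.sum_sub_distrib,
      Finset.sum_neg_distrib]
    ring
  have m1 : (∑ x, ∑ y, ∑ a, q x y a * Real.logb 2 (∑ y', q x y' a))
      = ∑ x, ∑ a, (∑ y, q x y a) * Real.logb 2 (∑ y', q x y' a) := by
    refine Finset.sum_congr rfl fun x _ => ?_
    rw [Finset.sum_comm]
    exact Finset.sum_congr rfl fun a _ => (Finset.sum_mul _ _ _).symm
  have m2 : (∑ x, ∑ y, ∑ a, q x y a * Real.logb 2 (∑ a', q x y a'))
      = ∑ x, ∑ y, (∑ a, q x y a) * Real.logb 2 (∑ a', q x y a') := by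
    refine Finset.sum_congr rfl fun x _ => Finset.sum_congr rfl fun y _ =>
      (Finset.sum_mul _ _ _).symm
  have m3 : (∑ x, ∑ y, ∑ a, q x y a * Real.logb 2 (∑ y', ∑ a', q x y' a'))
      = ∑ x, (∑ y, ∑ a, q x y a) * Real.logb 2 (∑ y', ∑ a', q x y' a') := by
    refine Finset.sum_congr rfl fun x _ => ?_
    rw [Finset.sum_mul]
    exact Finset.sum_congr rfl fun y _ => (Finset.sum_mul _ _ _).symm
  rw [lhs1, m1, m2, m3]
  simp only [g2, Finset.sum_neg_distrib]
  ring

lemma sum_ite_ne {K : ℕ} (f : Fin K → ℝ) :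
    (∑ j : Fin K, ∑ a, if a = j then 0 else f a) = ((K:ℝ) - 1) * ∑ a, f a := by
  have h : ∀ j : Fin K, (∑ a, if a = j then 0 else f a) = (∑ a, f a) - f j := by
    intro j
    have : ∀ a, (if a = j then 0 else f a) = f a - (if a = j then f a else 0) := by
      intro a; split <;> simp
    rw [Finset.sum_congr rfl fun a _ => this a, Finset.sum_sub_distrib,
      Finset.sum_ite_eq' Finset.univ j f]
    simp
  rw [Finset.sum_congr rfl fun j _ => h j, Finset.sum_sub_distrib, Finset.sum_const]
  simp only [Finset.card_univ, Fintype.card_fin, nsmul_eq_mul]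
  ring

lemma core {α β : Type*} [Fintype α] [Fintype β] {K : ℕ} (hK : 1 ≤ K)
    (q : α → β → Fin K → ℝ) (h0 : ∀ x y a, 0 ≤ q x y a)
    (h1 : (∑ x, ∑ y, ∑ a, q x y a) = 1)
    (hM : ∀ x y a, q x y a * (∑ y', ∑ a', q x y' a')
        = (∑ y', q x y' a) * (∑ a', q x y a')) :
    ∃ j : Fin K,
      ((∑ x, ∑ y, g2 (∑ a, q x y a)) - ∑ y, g2 (∑ x, ∑ a, q x y a))
        + ((K - 1 : ℝ) / K) * ((∑ x, g2 (∑ y, ∑ a, q x y a))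
            - ((∑ x, ∑ y, g2 (∑ a, q x y a)) - ∑ y, g2 (∑ x, ∑ a, q x y a)))
      ≤ (((∑ x, ∑ y, g2 (q x y j)) + ∑ a, if a = j then 0 else ∑ x, g2 (∑ y, q x y a))
          - ((∑ y, g2 (∑ x, q x y j)) + ∑ a, if a = j then 0 else g2 (∑ x, ∑ y, q x y a)))
        + ((∑ x, g2 (∑ y, ∑ a, q x y a))
            - ((∑ x, ∑ a, g2 (∑ y, q x y a)) - ∑ a, g2 (∑ x, ∑ y, q x y a))) := by
  have hKpos : (0:ℝ) < K := by exact_mod_cast hK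
  set HX := ∑ x, g2 (∑ y, ∑ a, q x y a) with hHX
  set HY := ∑ y, g2 (∑ x, ∑ a, q x y a) with hHY
  set HA := ∑ a, g2 (∑ x, ∑ y, q x y a) with hHA
  set HXY := ∑ x, ∑ y, g2 (∑ a, q x y a) with hHXY
  set HXA := ∑ x, ∑ a, g2 (∑ y, q x y a) with hHXA
  set HYA := ∑ y, ∑ a, g2 (∑ x, q x y a) with hHYA
  set HXYA := ∑ x, ∑ y, ∑ a, g2 (q x y a) with hHXYA
  have P1 : (∑ j : Fin K, ∑ x, ∑ y, g2 (q x y j)) = HXYA := by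
    rw [Finset.sum_comm, hHXYA]
    exact Finset.sum_congr rfl fun x _ => Finset.sum_comm
  have P2 : (∑ j : Fin K, ∑ a, if a = j then 0 else ∑ x, g2 (∑ y, q x y a))
      = ((K:ℝ) - 1) * ∑ a, ∑ x, g2 (∑ y, q x y a) := sum_ite_ne _
  have P2' : (∑ a, ∑ x, g2 (∑ y, q x y a)) = HXA := Finset.sum_comm
  have P3 : (∑ j : Fin K, ∑ y, g2 (∑ x, q x y j)) = HYA := Finset.sum_comm
  have P4 : (∑ j : Fin K, ∑ a, if a = j then 0 else g2 (∑ x, ∑ y, q x y a))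
      = ((K:ℝ) - 1) * HA := sum_ite_ne _
  have hsub : HYA ≤ HY + HA := by
    have h1' : (∑ y, ∑ a, ∑ x, q x y a) = 1 := by
      calc (∑ y, ∑ a, ∑ x, q x y a)
          = ∑ y, ∑ x, ∑ a, q x y a := Finset.sum_congr rfl fun y _ => Finset.sum_comm
        _ = ∑ x, ∑ y, ∑ a, q x y a := Finset.sum_comm
        _ = 1 := h1
    have := subadd (fun y a => ∑ x, q x y a)
      (fun y a => Finset.sum_nonneg fun x _ => h0 x y a) h1'
    rw [hHYA, hHY, hHA]
    calc (∑ y, ∑ a, g2 (∑ x, q x y a))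
        ≤ (∑ y, g2 (∑ a, ∑ x, q x y a)) + (∑ a, g2 (∑ y, ∑ x, q x y a)) := this
      _ = (∑ y, g2 (∑ x, ∑ a, q x y a)) + (∑ a, g2 (∑ x, ∑ y, q x y a)) := by
          congr 1
          · exact Finset.sum_congr rfl fun y _ => congrArg g2 Finset.sum_comm
          · exact Finset.sum_congr rfl fun a _ => congrArg g2 Finset.sum_comm
  have hmark : HXYA - HXA = HXY - HX := markov_ent q h0 hM
  have hne : (Finset.univ : Finset (Fin K)).Nonempty := by
    have : Nonempty (Fin K) := ⟨⟨0, hK⟩⟩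
    exact Finset.univ_nonempty
  have hsum : (∑ _j : Fin K, ((HXY - HY) + ((K - 1 : ℝ) / K) * (HX - (HXY - HY))))
      ≤ ∑ j : Fin K,
        ((((∑ x, ∑ y, g2 (q x y j)) + ∑ a, if a = j then 0 else ∑ x, g2 (∑ y, q x y a))
          - ((∑ y, g2 (∑ x, q x y j)) + ∑ a, if a = j then 0 else g2 (∑ x, ∑ y, q x y a)))
        + (HX - (HXA - HA))) := by
    rw [Finset.sum_const, Finset.card_univ, Fintype.card_fin, nsmul_eq_mul]
    have hL : (K:ℝ) * ((HXY - HY) + ((K - 1 : ℝ) / K) * (HX - (HXY - HY)))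
        = HXY - HY + (K:ℝ) * HX - HX := by
      field_simp
      ring
    have hR : (∑ j : Fin K,
        ((((∑ x, ∑ y, g2 (q x y j)) + ∑ a, if a = j then 0 else ∑ x, g2 (∑ y, q x y a))
          - ((∑ y, g2 (∑ x, q x y j)) + ∑ a, if a = j then 0 else g2 (∑ x, ∑ y, q x y a)))
        + (HX - (HXA - HA))))
        = HXYA - HXA - HYA + HA + (K:ℝ) * HX := by
      simp only [Finset.sum_add_distrib, Finset.sum_sub_distrib, P1, P2, P3, P4, P2',
        Finset.sum_const, Finset.card_univ, Fintype.card_fin, nsmul_eq_mul]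
      ring
    rw [hL, hR]
    linarith [hsub, hmark]
  obtain ⟨j, -, hj⟩ := Finset.exists_le_of_sum_le hne hsum
  exact ⟨j, hj⟩

lemma ent_g2 {Ω : Type*} [Fintype Ω] (μ : Ω → ℝ) {α : Type*} [Fintype α]
    [DecidableEq α] (X : Ω → α) : ent μ X = ∑ x, g2 (pr μ X x) := by
  simp [ent, g2]

lemma pr_comp' {Ω : Type*} [Fintype Ω] (μ : Ω → ℝ) {γ δ : Type*} [Fintype γ]
    [DecidableEq γ] [Fintype δ] [DecidableEq δ] (f : γ → δ) (W : Ω → γ) (b : δ) :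
    pr μ (fun ω => f (W ω)) b = ∑ a, if f a = b then pr μ W a else 0 := by
  have h : ∀ a : γ, (if f a = b then pr μ W a else 0)
      = ∑ ω, if W ω = a then (if f a = b then μ ω else 0) else 0 := by
    intro a; rw [pr]; split <;> simp
  rw [pr, Finset.sum_congr rfl fun a _ => h a, Finset.sum_comm]
  refine Finset.sum_congr rfl fun ω _ => ?_
  rw [Finset.sum_ite_eq Finset.univ (W ω) (fun a => if f a = b then μ ω else 0)]
  simp

lemma pr_nonneg_s2 {Ω : Type*} [Fintype Ω] {μ : Ω → ℝ} (hμ : ∀ ω, 0 ≤ μ ω)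
    {γ : Type*} [Fintype γ] [DecidableEq γ] (W : Ω → γ) (w : γ) : 0 ≤ pr μ W w :=
  Finset.sum_nonneg fun ω _ => by split <;> simp [hμ ω]

lemma sum_pr {Ω : Type*} [Fintype Ω] (μ : Ω → ℝ) {γ : Type*} [Fintype γ]
    [DecidableEq γ] (W : Ω → γ) : (∑ w, pr μ W w) = ∑ ω, μ ω := by
  unfold pr
  rw [Finset.sum_comm]
  refine Finset.sum_congr rfl fun ω _ => ?_
  rw [Finset.sum_ite_eq Finset.univ (W ω) (fun _ => μ ω)]
  simp

section Marg
variable {α β γ : Type*} [Fintype α] [Fintype β] [Fintype γ]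
  [DecidableEq α] [DecidableEq β] [DecidableEq γ]

omit [DecidableEq α] [DecidableEq β] [DecidableEq γ] in
lemma expand3 (G : α × β × γ → ℝ) :
    (∑ w : α × β × γ, G w) = ∑ a, ∑ b, ∑ c, G (a, b, c) :=
  (Fintype.sum_prod_type _).trans
    (Finset.sum_congr rfl fun _ _ => Fintype.sum_prod_type _)

lemma M1 (F : α × β × γ → ℝ) (x : α) :
    (∑ w : α × β × γ, if w.1 = x then F w else 0) = ∑ b, ∑ c, F (x, b, c) := by
  refine (expand3 _).trans ?_
  show (∑ a, ∑ b, ∑ c, if a = x then F (a, b, c) else 0) = _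
  simp [Finset.sum_ite_irrel, Finset.sum_ite_eq', Finset.sum_ite_eq]

lemma M2 (F : α × β × γ → ℝ) (y : β) :
    (∑ w : α × β × γ, if w.2.1 = y then F w else 0) = ∑ a, ∑ c, F (a, y, c) := by
  refine (expand3 _).trans ?_
  show (∑ a, ∑ b, ∑ c, if b = y then F (a, b, c) else 0) = _
  simp [Finset.sum_ite_irrel, Finset.sum_ite_eq', Finset.sum_ite_eq]

lemma M3 (F : α × β × γ → ℝ) (c0 : γ) :
    (∑ w : α × β × γ, if w.2.2 = c0 then F w else 0) = ∑ a, ∑ b, F (a, b, c0) := by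
  refine (expand3 _).trans ?_
  show (∑ a, ∑ b, ∑ c, if c = c0 then F (a, b, c) else 0) = _
  simp [Finset.sum_ite_irrel, Finset.sum_ite_eq', Finset.sum_ite_eq]

lemma M4 (F : α × β × γ → ℝ) (x : α) (y : β) :
    (∑ w : α × β × γ, if (w.1, w.2.1) = (x, y) then F w else 0) = ∑ c, F (x, y, c) := by
  refine (expand3 _).trans ?_
  show (∑ a, ∑ b, ∑ c, if (a, b) = (x, y) then F (a, b, c) else 0) = _
  simp [Prod.ext_iff, ite_and, Finset.sum_ite_irrel, Finset.sum_ite_eq', Finset.sum_ite_eq]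

lemma M5 (F : α × β × γ → ℝ) (x : α) (c0 : γ) :
    (∑ w : α × β × γ, if (w.1, w.2.2) = (x, c0) then F w else 0) = ∑ b, F (x, b, c0) := by
  refine (expand3 _).trans ?_
  show (∑ a, ∑ b, ∑ c, if (a, c) = (x, c0) then F (a, b, c) else 0) = _
  simp [Prod.ext_iff, ite_and, Finset.sum_ite_irrel, Finset.sum_ite_eq', Finset.sum_ite_eq]

lemma M6 (F : α × β × γ → ℝ) (x : α) (y : β) (c0 : γ) :
    (∑ w : α × β × γ, if (w.2.2, w.2.1, w.1) = (c0, y, x) then F w else 0) = F (x, y, c0) := by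
  refine (expand3 _).trans ?_
  show (∑ a, ∑ b, ∑ c, if (c, b, a) = (c0, y, x) then F (a, b, c) else 0) = _
  simp [Prod.ext_iff, ite_and, Finset.sum_ite_irrel, Finset.sum_ite_eq', Finset.sum_ite_eq]

lemma M7 (F : α × β × γ → ℝ) (x : α) (c0 : γ) :
    (∑ w : α × β × γ, if (w.2.2, w.1) = (c0, x) then F w else 0) = ∑ b, F (x, b, c0) := by
  refine (expand3 _).trans ?_
  show (∑ a, ∑ b, ∑ c, if (c, a) = (c0, x) then F (a, b, c) else 0) = _
  simp [Prod.ext_iff, ite_and, Finset.sum_ite_irrel, Finset.sum_ite_eq', Finset.sum_ite_eq]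

lemma M8 (F : α × β × γ → ℝ) (x : α) (y : β) :
    (∑ w : α × β × γ, if (w.2.1, w.1) = (y, x) then F w else 0) = ∑ c, F (x, y, c) := by
  refine (expand3 _).trans ?_
  show (∑ a, ∑ b, ∑ c, if (b, a) = (y, x) then F (a, b, c) else 0) = _
  simp [Prod.ext_iff, ite_and, Finset.sum_ite_irrel, Finset.sum_ite_eq', Finset.sum_ite_eq]

lemma MZsome (F : α × β × γ → ℝ) (j : γ) (y : β) (c0 : γ) :
    (∑ w : α × β × γ, if ((if w.2.2 = j then some w.2.1 else none), w.2.2) = (some y, c0)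
      then F w else 0)
    = if c0 = j then ∑ a, F (a, y, j) else 0 := by
  refine (expand3 _).trans ?_
  show (∑ a, ∑ b, ∑ c, if ((if c = j then some b else none), c) = (some y, c0)
      then F (a, b, c) else 0) = _
  by_cases h : c0 = j
  · have hpt : ∀ (a : α) (b : β) (c : γ),
        (if ((if c = j then some b else none), c) = (some y, c0) then F (a, b, c) else 0)
        = if b = y then (if c = j then F (a, b, c) else 0) else 0 := by
      intro a b c
      by_cases hc : c = j <;> by_cases hb : b = y <;> simp [hc, hb, h, Prod.ext_iff]
    rw [Finset.sum_congr rfl fun a _ => Finset.sum_congr rfl fun b _ =>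
      Finset.sum_congr rfl fun c _ => hpt a b c, if_pos h]
    simp [Finset.sum_ite_irrel, Finset.sum_ite_eq', Finset.sum_ite_eq]
  · have hpt : ∀ (a : α) (b : β) (c : γ),
        (if ((if c = j then some b else none), c) = (some y, c0) then F (a, b, c) else 0)
        = 0 := by
      intro a b c
      by_cases hc : c = j <;> simp [hc, Prod.ext_iff, h, Ne.symm h]
    rw [Finset.sum_congr rfl fun a _ => Finset.sum_congr rfl fun b _ =>
      Finset.sum_congr rfl fun c _ => hpt a b c, if_neg h]
    simp

lemma MZnone (F : α × β × γ → ℝ) (j : γ) (c0 : γ) :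
    (∑ w : α × β × γ, if ((if w.2.2 = j then some w.2.1 else none), w.2.2) = (none, c0)
      then F w else 0)
    = if c0 = j then 0 else ∑ a, ∑ b, F (a, b, c0) := by
  refine (expand3 _).trans ?_
  show (∑ a, ∑ b, ∑ c, if ((if c = j then some b else none), c) = (none, c0)
      then F (a, b, c) else 0) = _
  have hpt : ∀ (a : α) (b : β) (c : γ),
      (if ((if c = j then some b else none), c) = (none, c0) then F (a, b, c) else 0)
      = if c0 = j then 0 else (if c = c0 then F (a, b, c) else 0) := by
    intro a b c
    by_cases hc : c = j <;> by_cases h : c0 = j <;> by_cases hcc : c = c0 <;>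
      simp_all [Prod.ext_iff]
  rw [Finset.sum_congr rfl fun a _ => Finset.sum_congr rfl fun b _ =>
    Finset.sum_congr rfl fun c _ => hpt a b c]
  by_cases h : c0 = j <;>
    simp [h, Finset.sum_ite_irrel, Finset.sum_ite_eq', Finset.sum_ite_eq]

lemma MXZsome (F : α × β × γ → ℝ) (j : γ) (x : α) (y : β) (c0 : γ) :
    (∑ w : α × β × γ, if (w.1, (if w.2.2 = j then some w.2.1 else none), w.2.2) = (x, some y, c0)
      then F w else 0)
    = if c0 = j then F (x, y, j) else 0 := by
  refine (expand3 _).trans ?_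
  show (∑ a, ∑ b, ∑ c, if (a, (if c = j then some b else none), c) = (x, some y, c0)
      then F (a, b, c) else 0) = _
  by_cases h : c0 = j
  · have hpt : ∀ (a : α) (b : β) (c : γ),
        (if (a, (if c = j then some b else none), c) = (x, some y, c0) then F (a, b, c) else 0)
        = if a = x then (if b = y then (if c = j then F (a, b, c) else 0) else 0) else 0 := by
      intro a b c
      by_cases hc : c = j <;> by_cases hb : b = y <;> by_cases ha : a = x <;>
        simp [hc, hb, ha, h, Prod.ext_iff]
    rw [Finset.sum_congr rfl fun a _ => Finset.sum_congr rfl fun b _ =>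
      Finset.sum_congr rfl fun c _ => hpt a b c, if_pos h]
    simp [Finset.sum_ite_irrel, Finset.sum_ite_eq', Finset.sum_ite_eq]
  · have hpt : ∀ (a : α) (b : β) (c : γ),
        (if (a, (if c = j then some b else none), c) = (x, some y, c0) then F (a, b, c) else 0)
        = 0 := by
      intro a b c
      by_cases hc : c = j <;> simp [hc, Prod.ext_iff, h, Ne.symm h]
    rw [Finset.sum_congr rfl fun a _ => Finset.sum_congr rfl fun b _ =>
      Finset.sum_congr rfl fun c _ => hpt a b c, if_neg h]
    simp

lemma MXZnone (F : α × β × γ → ℝ) (j : γ) (x : α) (c0 : γ) :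
    (∑ w : α × β × γ, if (w.1, (if w.2.2 = j then some w.2.1 else none), w.2.2) = (x, none, c0)
      then F w else 0)
    = if c0 = j then 0 else ∑ b, F (x, b, c0) := by
  refine (expand3 _).trans ?_
  show (∑ a, ∑ b, ∑ c, if (a, (if c = j then some b else none), c) = (x, none, c0)
      then F (a, b, c) else 0) = _
  have hpt : ∀ (a : α) (b : β) (c : γ),
      (if (a, (if c = j then some b else none), c) = (x, none, c0) then F (a, b, c) else 0)
      = if c0 = j then 0 else (if a = x then (if c = c0 then F (a, b, c) else 0) else 0) := by
    intro a b c
    by_cases hc : c = j <;> by_cases h : c0 = j <;> by_cases hcc : c = c0 <;>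
      by_cases ha : a = x <;> simp_all [Prod.ext_iff]
  rw [Finset.sum_congr rfl fun a _ => Finset.sum_congr rfl fun b _ =>
    Finset.sum_congr rfl fun c _ => hpt a b c]
  by_cases h : c0 = j <;>
    simp [h, Finset.sum_ite_irrel, Finset.sum_ite_eq', Finset.sum_ite_eq]

end Marg

end Aux

/-- Converse bound of Corollary 1: for any action `A` with
`A - X - Y` Markov, the maximum over `j` of `H(X|Y_j,A) + I(X;A)` is at least
`H(X|Y) + ((K-1)/K) I(X;Y)` (i.e. some `j` attains at least this value). -/
theorem stmt2 {Ω α β : Type*} [Fintype Ω] [Fintype α] [DecidableEq α]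
    [Fintype β] [DecidableEq β] {K : ℕ} (hK : 1 ≤ K)
    (μ : Ω → ℝ) (hμ : IsProb μ) (X : Ω → α) (Y : Ω → β) (A : Ω → Fin K)
    (hMarkov : CondIndep μ A Y X) :
    ∃ j : Fin K,
      condEnt μ X Y + ((K - 1 : ℝ) / K) * mi μ X Y ≤
        condEnt μ X
            (fun ω => ((if A ω = j then some (Y ω) else (none : Option β)), A ω))
          + mi μ X A := by
  classical
  have hAYX : ∀ (a : Fin K) (y : β) (x : α),
      pr μ (fun ω => (A ω, Y ω, X ω)) (a, y, x)
        = pr μ (fun ω => (X ω, Y ω, A ω)) (x, y, a) := fun a y x =>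
    (pr_comp' μ (fun w : α × β × Fin K => (w.2.2, w.2.1, w.1))
      (fun ω => (X ω, Y ω, A ω)) (a, y, x)).trans (M6 _ x y a)
  have hXb : ∀ x : α, pr μ X x = ∑ y, ∑ a, pr μ (fun ω => (X ω, Y ω, A ω)) (x, y, a) :=
    fun x => (pr_comp' μ (fun w : α × β × Fin K => w.1)
      (fun ω => (X ω, Y ω, A ω)) x).trans (M1 _ x)
  have hAXb : ∀ (a : Fin K) (x : α), pr μ (fun ω => (A ω, X ω)) (a, x)
      = ∑ y, pr μ (fun ω => (X ω, Y ω, A ω)) (x, y, a) := fun a x =>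
    (pr_comp' μ (fun w : α × β × Fin K => (w.2.2, w.1))
      (fun ω => (X ω, Y ω, A ω)) (a, x)).trans (M7 _ x a)
  have hYXb : ∀ (y : β) (x : α), pr μ (fun ω => (Y ω, X ω)) (y, x)
      = ∑ a, pr μ (fun ω => (X ω, Y ω, A ω)) (x, y, a) := fun y x =>
    (pr_comp' μ (fun w : α × β × Fin K => (w.2.1, w.1))
      (fun ω => (X ω, Y ω, A ω)) (y, x)).trans (M8 _ x y)
  have h0 : ∀ x y a, 0 ≤ pr μ (fun ω => (X ω, Y ω, A ω)) (x, y, a) :=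
    fun x y a => pr_nonneg_s2 hμ.1 _ _
  have h1 : (∑ x, ∑ y, ∑ a, pr μ (fun ω => (X ω, Y ω, A ω)) (x, y, a)) = 1 :=
    ((expand3 (fun w => pr μ (fun ω => (X ω, Y ω, A ω)) w)).symm.trans
      (sum_pr μ _)).trans hμ.2
  have hM : ∀ x y a, pr μ (fun ω => (X ω, Y ω, A ω)) (x, y, a)
        * (∑ y', ∑ a', pr μ (fun ω => (X ω, Y ω, A ω)) (x, y', a'))
      = (∑ y', pr μ (fun ω => (X ω, Y ω, A ω)) (x, y', a))
        * (∑ a', pr μ (fun ω => (X ω, Y ω, A ω)) (x, y, a')) := by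
    intro x y a
    have h := hMarkov a y x
    rw [hAYX a y x, hXb x, hAXb a x, hYXb y x] at h
    exact h
  have hEX : ent μ X = ∑ x, g2 (∑ y, ∑ a, pr μ (fun ω => (X ω, Y ω, A ω)) (x, y, a)) := by
    rw [ent_g2]
    exact Finset.sum_congr rfl fun x _ => congrArg g2 (hXb x)
  have hEY : ent μ Y = ∑ y, g2 (∑ x, ∑ a, pr μ (fun ω => (X ω, Y ω, A ω)) (x, y, a)) := by
    rw [ent_g2]
    refine Finset.sum_congr rfl fun y _ => congrArg g2 ?_
    exact (pr_comp' μ (fun w : α × β × Fin K => w.2.1)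
      (fun ω => (X ω, Y ω, A ω)) y).trans (M2 _ y)
  have hEA : ent μ A = ∑ a, g2 (∑ x, ∑ y, pr μ (fun ω => (X ω, Y ω, A ω)) (x, y, a)) := by
    rw [ent_g2]
    refine Finset.sum_congr rfl fun a _ => congrArg g2 ?_
    exact (pr_comp' μ (fun w : α × β × Fin K => w.2.2)
      (fun ω => (X ω, Y ω, A ω)) a).trans (M3 _ a)
  have hEXY : ent μ (fun ω => (X ω, Y ω))
      = ∑ x, ∑ y, g2 (∑ a, pr μ (fun ω => (X ω, Y ω, A ω)) (x, y, a)) := by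
    refine (ent_g2 μ _).trans ?_
    refine (Fintype.sum_prod_type _).trans ?_
    refine Finset.sum_congr rfl fun x _ => Finset.sum_congr rfl fun y _ => congrArg g2 ?_
    exact (pr_comp' μ (fun w : α × β × Fin K => (w.1, w.2.1))
      (fun ω => (X ω, Y ω, A ω)) (x, y)).trans (M4 _ x y)
  have hEXA : ent μ (fun ω => (X ω, A ω))
      = ∑ x, ∑ a, g2 (∑ y, pr μ (fun ω => (X ω, Y ω, A ω)) (x, y, a)) := by
    refine (ent_g2 μ _).trans ?_
    refine (Fintype.sum_prod_type _).trans ?_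
    refine Finset.sum_congr rfl fun x _ => Finset.sum_congr rfl fun a _ => congrArg g2 ?_
    exact (pr_comp' μ (fun w : α × β × Fin K => (w.1, w.2.2))
      (fun ω => (X ω, Y ω, A ω)) (x, a)).trans (M5 _ x a)
  have hEZ : ∀ j : Fin K,
      ent μ (fun ω => ((if A ω = j then some (Y ω) else (none : Option β)), A ω))
      = (∑ y, g2 (∑ x, pr μ (fun ω => (X ω, Y ω, A ω)) (x, y, j)))
        + ∑ a, if a = j then 0
            else g2 (∑ x, ∑ y, pr μ (fun ω => (X ω, Y ω, A ω)) (x, y, a)) := by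
    intro j
    have hnone : ∀ a0 : Fin K,
        pr μ (fun ω => ((if A ω = j then some (Y ω) else (none : Option β)), A ω)) (none, a0)
        = if a0 = j then 0 else ∑ x, ∑ y, pr μ (fun ω => (X ω, Y ω, A ω)) (x, y, a0) :=
      fun a0 => (pr_comp' μ
        (fun w : α × β × Fin K => ((if w.2.2 = j then some w.2.1 else none), w.2.2))
        (fun ω => (X ω, Y ω, A ω)) (none, a0)).trans (MZnone _ j a0)
    have hsome : ∀ (y : β) (a0 : Fin K),
        pr μ (fun ω => ((if A ω = j then some (Y ω) else (none : Option β)), A ω)) (some y, a0)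
        = if a0 = j then ∑ x, pr μ (fun ω => (X ω, Y ω, A ω)) (x, y, j) else 0 :=
      fun y a0 => (pr_comp' μ
        (fun w : α × β × Fin K => ((if w.2.2 = j then some w.2.1 else none), w.2.2))
        (fun ω => (X ω, Y ω, A ω)) (some y, a0)).trans (MZsome _ j y a0)
    refine (ent_g2 μ _).trans ?_
    refine (Fintype.sum_prod_type _).trans ?_
    refine (Fintype.sum_option _).trans ?_
    show ((∑ a0 : Fin K, g2 (pr μ
          (fun ω => ((if A ω = j then some (Y ω) else (none : Option β)), A ω)) (none, a0)))
        + ∑ y, ∑ a0 : Fin K, g2 (pr μ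
          (fun ω => ((if A ω = j then some (Y ω) else (none : Option β)), A ω)) (some y, a0)))
      = _
    rw [Finset.sum_congr rfl fun a0 _ => congrArg g2 (hnone a0),
      Finset.sum_congr rfl fun y _ =>
        Finset.sum_congr rfl fun a0 _ => congrArg g2 (hsome y a0)]
    simp only [apply_ite g2, g2_zero, Finset.sum_ite_eq', Finset.mem_univ, if_true]
    exact add_comm _ _
  have hEXZ : ∀ j : Fin K,
      ent μ (fun ω => (X ω, (if A ω = j then some (Y ω) else (none : Option β)), A ω))
      = (∑ x, ∑ y, g2 (pr μ (fun ω => (X ω, Y ω, A ω)) (x, y, j)))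
        + ∑ a, if a = j then 0
            else ∑ x, g2 (∑ y, pr μ (fun ω => (X ω, Y ω, A ω)) (x, y, a)) := by
    intro j
    have hnone : ∀ (x : α) (a0 : Fin K),
        pr μ (fun ω => (X ω, (if A ω = j then some (Y ω) else (none : Option β)), A ω))
          (x, none, a0)
        = if a0 = j then 0 else ∑ y, pr μ (fun ω => (X ω, Y ω, A ω)) (x, y, a0) :=
      fun x a0 => (pr_comp' μ
        (fun w : α × β × Fin K => (w.1, (if w.2.2 = j then some w.2.1 else none), w.2.2))
        (fun ω => (X ω, Y ω, A ω)) (x, none, a0)).trans (MXZnone _ j x a0)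
    have hsome : ∀ (x : α) (y : β) (a0 : Fin K),
        pr μ (fun ω => (X ω, (if A ω = j then some (Y ω) else (none : Option β)), A ω))
          (x, some y, a0)
        = if a0 = j then pr μ (fun ω => (X ω, Y ω, A ω)) (x, y, j) else 0 :=
      fun x y a0 => (pr_comp' μ
        (fun w : α × β × Fin K => (w.1, (if w.2.2 = j then some w.2.1 else none), w.2.2))
        (fun ω => (X ω, Y ω, A ω)) (x, some y, a0)).trans (MXZsome _ j x y a0)
    refine (ent_g2 μ _).trans ?_
    refine (Fintype.sum_prod_type _).trans ?_
    refine (Finset.sum_congr rfl fun x _ =>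
      (Fintype.sum_prod_type _).trans (Fintype.sum_option _)).trans ?_
    show (∑ x, ((∑ a0 : Fin K, g2 (pr μ
          (fun ω => (X ω, (if A ω = j then some (Y ω) else (none : Option β)), A ω))
          (x, none, a0)))
        + ∑ y, ∑ a0 : Fin K, g2 (pr μ
          (fun ω => (X ω, (if A ω = j then some (Y ω) else (none : Option β)), A ω))
          (x, some y, a0))))
      = _
    rw [Finset.sum_congr rfl fun x _ => congrArg₂ (· + ·)
      (Finset.sum_congr rfl fun a0 _ => congrArg g2 (hnone x a0))
      (Finset.sum_congr rfl fun y _ =>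
        Finset.sum_congr rfl fun a0 _ => congrArg g2 (hsome x y a0))]
    simp only [apply_ite g2, g2_zero, Finset.sum_ite_eq', Finset.mem_univ, if_true]
    rw [Finset.sum_add_distrib]
    have swap : (∑ x, ∑ a, if a = j then 0
          else g2 (∑ y, pr μ (fun ω => (X ω, Y ω, A ω)) (x, y, a)))
        = ∑ a, if a = j then 0
          else ∑ x, g2 (∑ y, pr μ (fun ω => (X ω, Y ω, A ω)) (x, y, a)) := by
      rw [Finset.sum_comm]
      refine Finset.sum_congr rfl fun a _ => ?_
      rw [Finset.sum_ite_irrel]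
      simp
    rw [swap]
    exact add_comm _ _
  obtain ⟨j, hj⟩ := core hK (fun x y a => pr μ (fun ω => (X ω, Y ω, A ω)) (x, y, a)) h0 h1 hM
  refine ⟨j, ?_⟩
  simp only [condEnt, mi]
  rw [hEX, hEY, hEXY, hEA, hEXA, hEZ j, hEXZ j]
  exact hj
end

section
/- If X = Y (the side information equals the source) and K = 2 in the switching side-information setup, then the minimal value of max_{j∈{1,2}} H(X|Y_j,A) + I(X;A) over all conditional distributions p(a|x) with A ∈ {1,2} equals H(X)/2, achieved by A uniform on {1,2} independent of X. -/
open Finset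

set_option linter.unusedSectionVars false
set_option maxHeartbeats 1000000

section AuxKL

/-- Gibbs-type inequality: `∑ u (log v - log u) ≤ ∑ (v - u)`. -/
lemma kl_aux {ι : Type*} [Fintype ι] (u v : ι → ℝ) (hu : ∀ i, 0 ≤ u i) (hv : ∀ i, 0 ≤ v i)
    (hac : ∀ i, v i = 0 → u i = 0) :
    ∑ i, u i * (Real.log (v i) - Real.log (u i)) ≤ ∑ i, (v i - u i) := by
  refine Finset.sum_le_sum fun i _ => ?_
  rcases eq_or_lt_of_le (hu i) with h0 | h0
  · simp [← h0, hv i]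
  · have hvi : 0 < v i := by
      rcases eq_or_lt_of_le (hv i) with h1 | h1
      · exact absurd (hac i h1.symm) (ne_of_gt h0).symm.symm
      · exact h1
    have hdiv : 0 < v i / u i := div_pos hvi h0
    have hlog : Real.log (v i / u i) ≤ v i / u i - 1 := Real.log_le_sub_one_of_pos hdiv
    rw [Real.log_div (ne_of_gt hvi) (ne_of_gt h0)] at hlog
    have := mul_le_mul_of_nonneg_left hlog (le_of_lt h0)
    calc u i * (Real.log (v i) - Real.log (u i)) ≤ u i * (v i / u i - 1) := this
      _ = v i - u i := by field_simp

end AuxKL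

section AuxPr

lemma pr_of_injective {Ω : Type*} [Fintype Ω] [DecidableEq Ω] (μ : Ω → ℝ) {α : Type*} [Fintype α]
    [DecidableEq α] {X : Ω → α} (hX : Function.Injective X) (ω : Ω) :
    pr μ X (X ω) = μ ω := by
  simp [pr, hX.eq_iff, Finset.sum_ite_eq']

lemma ent_of_injective {Ω : Type*} [Fintype Ω] [DecidableEq Ω] (μ : Ω → ℝ) {α : Type*} [Fintype α]
    [DecidableEq α] {X : Ω → α} (hX : Function.Injective X) :
    ent μ X = - ∑ ω, μ ω * Real.logb 2 (μ ω) := by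
  rw [ent]
  congr 1
  rw [← Finset.sum_subset (Finset.subset_univ (Finset.image X Finset.univ))]
  · rw [Finset.sum_image (fun a _ b _ h => hX h)]
    exact Finset.sum_congr rfl fun ω _ => by rw [pr_of_injective μ hX]
  · intro x _ hx
    have : pr μ X x = 0 := Finset.sum_eq_zero fun ω _ => by
      refine if_neg fun hEq => hx ?_
      exact Finset.mem_image.2 ⟨ω, Finset.mem_univ _, hEq⟩
    simp [this]

variable {𝒳 : Type*} [Fintype 𝒳] [DecidableEq 𝒳] (q : 𝒳 × Fin 2 → ℝ)

lemma pr_fst' (x : 𝒳) : pr q Prod.fst x = q (x,0) + q (x,1) := by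
  simp [pr, Fintype.sum_prod_type, Fin.sum_univ_two, Finset.sum_ite_eq',
    Finset.sum_add_distrib]

lemma pr_snd' (a : Fin 2) : pr q Prod.snd a = ∑ x, q (x,a) := by
  fin_cases a <;>
  simp [pr, Fintype.sum_prod_type, Fin.sum_univ_two]

lemma ent_fst' : ent q Prod.fst
    = - ∑ x, (q (x,0) + q (x,1)) * Real.logb 2 (q (x,0) + q (x,1)) := by
  simp [ent, pr_fst']

lemma ent_snd' : ent q Prod.snd
    = - ((∑ x, q (x,0)) * Real.logb 2 (∑ x, q (x,0))
        + (∑ x, q (x,1)) * Real.logb 2 (∑ x, q (x,1))) := by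
  simp [ent, pr_snd', Fin.sum_univ_two]

lemma ent_XA' : ent q (fun ω => (ω.1, ω.2))
    = - ∑ x, (q (x,0) * Real.logb 2 (q (x,0)) + q (x,1) * Real.logb 2 (q (x,1))) := by
  rw [ent_of_injective q (fun ω ω' h => Prod.ext (congrArg Prod.fst h) (congrArg Prod.snd h))]
  rw [Fintype.sum_prod_type]
  congr 1
  exact Finset.sum_congr rfl fun x _ => by rw [Fin.sum_univ_two]

lemma ent_XY' (j : Fin 2) :
    ent q (fun ω : 𝒳 × Fin 2 => (ω.1, ((if ω.2 = j then some ω.1 else (none : Option 𝒳)), ω.2)))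
    = - ∑ x, (q (x,0) * Real.logb 2 (q (x,0)) + q (x,1) * Real.logb 2 (q (x,1))) := by
  rw [ent_of_injective q (fun ω ω' h => ?_)]
  · rw [Fintype.sum_prod_type]
    congr 1
    exact Finset.sum_congr rfl fun x _ => by rw [Fin.sum_univ_two]
  · have h1 := congrArg Prod.fst h
    have h2 := congrArg (fun z => z.2.2) h
    exact Prod.ext h1 h2

lemma pr_Y0_some0 (x : 𝒳) :
    pr q (fun ω : 𝒳 × Fin 2 => ((if ω.2 = 0 then some ω.1 else (none : Option 𝒳)), ω.2))
      (some x, 0) = q (x, 0) := by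
  simp [pr, Fintype.sum_prod_type, Fin.sum_univ_two, Prod.ext_iff, Finset.sum_ite_eq']

lemma pr_Y0_some1 (x : 𝒳) :
    pr q (fun ω : 𝒳 × Fin 2 => ((if ω.2 = 0 then some ω.1 else (none : Option 𝒳)), ω.2))
      (some x, 1) = 0 := by
  simp [pr, Fintype.sum_prod_type, Fin.sum_univ_two, Prod.ext_iff]

lemma pr_Y0_none0 :
    pr q (fun ω : 𝒳 × Fin 2 => ((if ω.2 = 0 then some ω.1 else (none : Option 𝒳)), ω.2))
      (none, 0) = 0 := by
  simp [pr, Fintype.sum_prod_type, Fin.sum_univ_two, Prod.ext_iff]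

lemma pr_Y0_none1 :
    pr q (fun ω : 𝒳 × Fin 2 => ((if ω.2 = 0 then some ω.1 else (none : Option 𝒳)), ω.2))
      (none, 1) = ∑ x, q (x, 1) := by
  simp [pr, Fintype.sum_prod_type, Fin.sum_univ_two, Prod.ext_iff]

lemma ent_Y0' :
    ent q (fun ω : 𝒳 × Fin 2 => ((if ω.2 = 0 then some ω.1 else (none : Option 𝒳)), ω.2))
    = - ((∑ x, q (x,0) * Real.logb 2 (q (x,0)))
        + (∑ x, q (x,1)) * Real.logb 2 (∑ x, q (x,1))) := by
  rw [ent, Fintype.sum_prod_type, Fintype.sum_option]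
  simp [Fin.sum_univ_two, pr_Y0_some0, pr_Y0_some1, pr_Y0_none0, pr_Y0_none1, add_comm]

lemma pr_Y1_some1 (x : 𝒳) :
    pr q (fun ω : 𝒳 × Fin 2 => ((if ω.2 = 1 then some ω.1 else (none : Option 𝒳)), ω.2))
      (some x, 1) = q (x, 1) := by
  simp [pr, Fintype.sum_prod_type, Fin.sum_univ_two, Prod.ext_iff, Finset.sum_ite_eq']

lemma pr_Y1_some0 (x : 𝒳) :
    pr q (fun ω : 𝒳 × Fin 2 => ((if ω.2 = 1 then some ω.1 else (none : Option 𝒳)), ω.2))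
      (some x, 0) = 0 := by
  simp [pr, Fintype.sum_prod_type, Fin.sum_univ_two, Prod.ext_iff]

lemma pr_Y1_none1 :
    pr q (fun ω : 𝒳 × Fin 2 => ((if ω.2 = 1 then some ω.1 else (none : Option 𝒳)), ω.2))
      (none, 1) = 0 := by
  simp [pr, Fintype.sum_prod_type, Fin.sum_univ_two, Prod.ext_iff]

lemma pr_Y1_none0 :
    pr q (fun ω : 𝒳 × Fin 2 => ((if ω.2 = 1 then some ω.1 else (none : Option 𝒳)), ω.2))
      (none, 0) = ∑ x, q (x, 0) := by
  simp [pr, Fintype.sum_prod_type, Fin.sum_univ_two, Prod.ext_iff]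

lemma ent_Y1' :
    ent q (fun ω : 𝒳 × Fin 2 => ((if ω.2 = 1 then some ω.1 else (none : Option 𝒳)), ω.2))
    = - ((∑ x, q (x,1) * Real.logb 2 (q (x,1)))
        + (∑ x, q (x,0)) * Real.logb 2 (∑ x, q (x,0))) := by
  rw [ent, Fintype.sum_prod_type, Fintype.sum_option]
  simp [Fin.sum_univ_two, pr_Y1_some0, pr_Y1_some1, pr_Y1_none0, pr_Y1_none1, add_comm]

/-- The objective splits as `H(X) - h_j`. -/
lemma obj_eq (pX : 𝒳 → ℝ) (hm : ∀ x, pr q Prod.fst x = pX x) :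
    (condEnt q Prod.fst
        (fun ω : 𝒳 × Fin 2 => ((if ω.2 = 0 then some ω.1 else (none : Option 𝒳)), ω.2))
      + mi q Prod.fst Prod.snd
      = (- ∑ x, pX x * Real.logb 2 (pX x))
        - ((∑ x, q (x,0)) * Real.logb 2 (∑ x, q (x,0))
            - ∑ x, q (x,0) * Real.logb 2 (q (x,0))))
    ∧ (condEnt q Prod.fst
        (fun ω : 𝒳 × Fin 2 => ((if ω.2 = 1 then some ω.1 else (none : Option 𝒳)), ω.2))
      + mi q Prod.fst Prod.snd
      = (- ∑ x, pX x * Real.logb 2 (pX x))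
        - ((∑ x, q (x,1)) * Real.logb 2 (∑ x, q (x,1))
            - ∑ x, q (x,1) * Real.logb 2 (q (x,1)))) := by
  have hfst : ent q Prod.fst = - ∑ x, pX x * Real.logb 2 (pX x) := by
    rw [ent]
    congr 1
    exact Finset.sum_congr rfl fun x _ => by rw [hm]
  constructor
  · rw [mi, condEnt, condEnt, ent_XY' q 0, ent_Y0', ent_XA', ent_snd', hfst,
      Finset.sum_add_distrib]
    ring
  · rw [mi, condEnt, condEnt, ent_XY' q 1, ent_Y1', ent_XA', ent_snd', hfst,
      Finset.sum_add_distrib]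
    ring

end AuxPr

set_option linter.unusedSectionVars false

lemma sum_mul_logb {𝒳 : Type*} [Fintype 𝒳] (g w : 𝒳 → ℝ) :
    ∑ x, g x * Real.logb 2 (w x) = (∑ x, g x * Real.log (w x)) / Real.log 2 := by
  rw [Finset.sum_div]
  exact Finset.sum_congr rfl fun x _ => by rw [Real.logb, mul_div_assoc]

lemma mul_logb (s : ℝ) : s * Real.logb 2 s = s * Real.log s / Real.log 2 := by
  rw [Real.logb, mul_div_assoc]

/-- Key inequality: `h0 + h1 ≤ H(X)` (i.e. `H(X|A) ≤ H(X)`). -/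
lemma h_sum_le {𝒳 : Type*} [Fintype 𝒳] [DecidableEq 𝒳] (q : 𝒳 × Fin 2 → ℝ)
    (hq : IsProb q) (pX : 𝒳 → ℝ) (hm : ∀ x, pr q Prod.fst x = pX x) :
    ((∑ x, q (x,0)) * Real.logb 2 (∑ x, q (x,0)) - ∑ x, q (x,0) * Real.logb 2 (q (x,0)))
    + ((∑ x, q (x,1)) * Real.logb 2 (∑ x, q (x,1)) - ∑ x, q (x,1) * Real.logb 2 (q (x,1)))
    ≤ - ∑ x, pX x * Real.logb 2 (pX x) := by
  obtain ⟨hq0, hq1⟩ := hq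
  set S0 := ∑ x, q (x,0) with hS0
  set S1 := ∑ x, q (x,1) with hS1
  have hfx : ∀ x, pX x = q (x,0) + q (x,1) := fun x => by rw [← hm, pr_fst']
  have hsum1 : ∑ x, (q (x,0) + q (x,1)) = 1 := by
    rw [← hq1, Fintype.sum_prod_type]
    exact Finset.sum_congr rfl fun x _ => (Fin.sum_univ_two (fun a => q (x,a))).symm
  have hS01 : S0 + S1 = 1 := by
    rw [hS0, hS1, ← Finset.sum_add_distrib, hsum1]
  -- nonnegativity facts
  have hqnn : ∀ x (a : Fin 2), 0 ≤ q (x,a) := fun x a => hq0 (x,a)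
  have hfnn : ∀ x, 0 ≤ q (x,0) + q (x,1) := fun x => add_nonneg (hqnn x 0) (hqnn x 1)
  have hSnn : ∀ a : Fin 2, 0 ≤ ∑ x, q (x,a) := fun a =>
    Finset.sum_nonneg fun x _ => hqnn x a
  have hqleS : ∀ x (a : Fin 2), q (x,a) ≤ ∑ x', q (x',a) := fun x a =>
    Finset.single_le_sum (fun x' _ => hqnn x' a) (Finset.mem_univ x)
  -- natural log inequality via KL
  have nat_ineq : S0 * Real.log S0 + S1 * Real.log S1
      + ∑ x, (q (x,0) + q (x,1)) * Real.log (q (x,0) + q (x,1))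
      - ∑ x, (q (x,0) * Real.log (q (x,0)) + q (x,1) * Real.log (q (x,1))) ≤ 0 := by
    have key := kl_aux (ι := 𝒳 × Fin 2) q
      (fun z => (q (z.1,0) + q (z.1,1)) * (∑ x, q (x, z.2)))
      (fun z => hq0 z)
      (fun z => mul_nonneg (hfnn z.1) (hSnn z.2))
      (fun z hz => by
        rcases mul_eq_zero.1 hz with h | h
        · obtain ⟨x, a⟩ := z
          have h1 : q (x,a) ≤ q (x,0) + q (x,1) := by
            fin_cases a
            · exact le_add_of_nonneg_right (hqnn x 1)
            · exact le_add_of_nonneg_left (hqnn x 0)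
          exact le_antisymm (h ▸ h1) (hq0 _)
        · exact le_antisymm (h ▸ hqleS z.1 z.2) (hq0 _))
    -- rewrite log of product term-wise
    have lhs_eq : ∑ z : 𝒳 × Fin 2, q z *
        (Real.log ((q (z.1,0) + q (z.1,1)) * (∑ x, q (x, z.2))) - Real.log (q z))
        = ∑ z : 𝒳 × Fin 2, q z *
        (Real.log (q (z.1,0) + q (z.1,1)) + Real.log (∑ x, q (x, z.2)) - Real.log (q z)) := by
      refine Finset.sum_congr rfl fun z _ => ?_
      rcases eq_or_lt_of_le (hq0 z) with h0 | h0
      · rw [← h0]; ring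
      · obtain ⟨x, a⟩ := z
        have hfpos : 0 < q (x,0) + q (x,1) := by
          rcases eq_or_lt_of_le (hfnn x) with h | h
          · exfalso
            have h1 : q (x,a) ≤ q (x,0) + q (x,1) := by
              fin_cases a
              · exact le_add_of_nonneg_right (hqnn x 1)
              · exact le_add_of_nonneg_left (hqnn x 0)
            rw [← h] at h1
            exact absurd (le_antisymm h1 (hq0 _)) (ne_of_gt h0).symm.symm
          · exact h
        have hSpos : 0 < ∑ x', q (x', a) := lt_of_lt_of_le h0 (hqleS x a)
        rw [Real.log_mul (ne_of_gt hfpos) (ne_of_gt hSpos)]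
    rw [lhs_eq] at key
    -- compute RHS of key
    have rhs_eq : ∑ z : 𝒳 × Fin 2,
        ((q (z.1,0) + q (z.1,1)) * (∑ x, q (x, z.2)) - q z) = 0 := by
      rw [Finset.sum_sub_distrib, hq1, Fintype.sum_prod_type]
      have : ∀ x : 𝒳, ∑ a : Fin 2, (q (x,0) + q (x,1)) * (∑ x', q (x', a))
          = (q (x,0) + q (x,1)) * (S0 + S1) := fun x => by
        rw [Fin.sum_univ_two]; ring
      rw [Finset.sum_congr rfl fun x _ => this x, hS01]
      simp [hsum1]
    rw [rhs_eq] at key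
    -- expand LHS of key over the product type
    have expand : ∑ z : 𝒳 × Fin 2, q z *
        (Real.log (q (z.1,0) + q (z.1,1)) + Real.log (∑ x, q (x, z.2)) - Real.log (q z))
        = S0 * Real.log S0 + S1 * Real.log S1
          + ∑ x, (q (x,0) + q (x,1)) * Real.log (q (x,0) + q (x,1))
          - ∑ x, (q (x,0) * Real.log (q (x,0)) + q (x,1) * Real.log (q (x,1))) := by
      rw [Fintype.sum_prod_type]
      have : ∀ x : 𝒳, ∑ a : Fin 2, q (x,a) *
          (Real.log (q (x,0) + q (x,1)) + Real.log (∑ x', q (x', a)) - Real.log (q (x,a)))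
          = (q (x,0) + q (x,1)) * Real.log (q (x,0) + q (x,1))
            + q (x,0) * Real.log S0 + q (x,1) * Real.log S1
            - (q (x,0) * Real.log (q (x,0)) + q (x,1) * Real.log (q (x,1))) := fun x => by
        rw [Fin.sum_univ_two, ← hS0, ← hS1]; ring
      rw [Finset.sum_congr rfl fun x _ => this x]
      rw [show ∀ F G H I : 𝒳 → ℝ, ∑ x, (F x + G x + H x - I x)
        = ∑ x, F x + ∑ x, G x + ∑ x, H x - ∑ x, I x from fun F G H I => by
          rw [Finset.sum_sub_distrib, Finset.sum_add_distrib, Finset.sum_add_distrib]]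
      rw [← Finset.sum_mul, ← Finset.sum_mul, ← hS0, ← hS1]
      ring
    rw [expand] at key
    exact key
  -- convert to logb
  have hlog2 : (0:ℝ) < Real.log 2 := Real.log_pos (by norm_num)
  have hgoal : ∀ x, pX x * Real.logb 2 (pX x)
      = (q (x,0) + q (x,1)) * Real.logb 2 (q (x,0) + q (x,1)) := fun x => by rw [hfx]
  rw [Finset.sum_congr rfl fun x _ => hgoal x]
  rw [mul_logb, mul_logb, sum_mul_logb, sum_mul_logb,
    sum_mul_logb (fun x => q (x,0) + q (x,1)) (fun x => q (x,0) + q (x,1))]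
  rw [div_sub_div_same, div_sub_div_same, ← add_div, ← neg_div]
  rw [div_le_div_iff_of_pos_right hlog2]
  have : ∑ x, (q (x,0) * Real.log (q (x,0)) + q (x,1) * Real.log (q (x,1)))
      = ∑ x, q (x,0) * Real.log (q (x,0)) + ∑ x, q (x,1) * Real.log (q (x,1)) :=
    Finset.sum_add_distrib
  linarith [nat_ineq]

/-- Switching side information with `Y = X` and `K = 2`:
over all joint distributions of `(X,A)` with the given marginal of `X`
(`A ∈ {1,2}`, `Y_j = X` if `A = j` and `= e` otherwise), the least value of
`max_{j∈{1,2}} H(X|Y_j,A) + I(X;A)` is `H(X)/2`. -/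
theorem stmt4 {𝒳 : Type*} [Fintype 𝒳] [DecidableEq 𝒳] (pX : 𝒳 → ℝ)
    (hpX : (∀ x, 0 ≤ pX x) ∧ ∑ x, pX x = 1) :
    IsLeast
      { r : ℝ | ∃ q : 𝒳 × Fin 2 → ℝ, IsProb q ∧
          (∀ x, pr q Prod.fst x = pX x) ∧
          r = max
            (condEnt q Prod.fst
                (fun ω => ((if ω.2 = 0 then some ω.1 else (none : Option 𝒳)), ω.2))
              + mi q Prod.fst Prod.snd)
            (condEnt q Prod.fst
                (fun ω => ((if ω.2 = 1 then some ω.1 else (none : Option 𝒳)), ω.2))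
              + mi q Prod.fst Prod.snd) }
      ((- ∑ x, pX x * Real.logb 2 (pX x)) / 2) := by
  obtain ⟨hp0, hp1⟩ := hpX
  set HX := - ∑ x, pX x * Real.logb 2 (pX x) with hHX
  constructor
  · -- membership: q uniform-independent
    refine ⟨fun z => pX z.1 / 2, ⟨fun z => div_nonneg (hp0 z.1) (by norm_num), ?_⟩, ?_, ?_⟩
    · rw [Fintype.sum_prod_type]
      rw [Finset.sum_congr rfl fun x _ => Fin.sum_univ_two (fun _ => pX x / 2)]
      rw [Finset.sum_congr rfl fun x _ => (by ring : pX x / 2 + pX x / 2 = pX x)]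
      exact hp1
    · intro x
      rw [pr_fst']
      ring
    · set q : 𝒳 × Fin 2 → ℝ := fun z => pX z.1 / 2 with hqdef
      have hm : ∀ x, pr q Prod.fst x = pX x := fun x => by rw [pr_fst']; ring
      obtain ⟨e0, e1⟩ := obj_eq q pX hm
      rw [e0, e1, ← hHX]
      have hq01 : ∀ x (a : Fin 2), q (x, a) = pX x / 2 := fun x a => rfl
      have hS : ∀ a : Fin 2, ∑ x, q (x, a) = 1/2 := fun a => by
        simp only [hq01, ← Finset.sum_div, hp1]
      have hterm : ∀ x (a : Fin 2), q (x,a) * Real.logb 2 (q (x,a))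
          = (pX x * Real.logb 2 (pX x)) / 2 - pX x / 2 := by
        intro x a
        rw [hq01]
        rcases eq_or_lt_of_le (hp0 x) with h | h
        · rw [← h]; simp
        · rw [Real.logb_div (ne_of_gt h) (by norm_num),
            Real.logb_self_eq_one (by norm_num : (1:ℝ) < 2)]
          ring
      have hsum : ∀ a : Fin 2, ∑ x, q (x,a) * Real.logb 2 (q (x,a))
          = (∑ x, pX x * Real.logb 2 (pX x)) / 2 - 1/2 := by
        intro a
        rw [Finset.sum_congr rfl fun x _ => hterm x a, Finset.sum_sub_distrib,
          ← Finset.sum_div, ← Finset.sum_div, hp1]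
      have hhalf : Real.logb 2 (1/2 : ℝ) = -1 := by
        rw [one_div, Real.logb_inv, Real.logb_self_eq_one (by norm_num : (1:ℝ) < 2)]
      rw [hS 0, hsum 0, hhalf, hHX]
      rw [max_self]
      ring
  · -- lower bound
    rintro r ⟨q, hq, hm, rfl⟩
    obtain ⟨e0, e1⟩ := obj_eq q pX hm
    rw [e0, e1, ← hHX]
    have hkey := h_sum_le q hq pX hm
    rw [← hHX] at hkey
    set h0 := (∑ x, q (x,0)) * Real.logb 2 (∑ x, q (x,0))
      - ∑ x, q (x,0) * Real.logb 2 (q (x,0)) with hh0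
    set h1 := (∑ x, q (x,1)) * Real.logb 2 (∑ x, q (x,1))
      - ∑ x, q (x,1) * Real.logb 2 (q (x,1)) with hh1
    rcases le_total h0 h1 with hle | hle
    · exact le_trans (by linarith) (le_max_left (HX - h0) (HX - h1))
    · exact le_trans (by linarith) (le_max_right (HX - h0) (HX - h1))
end
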